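/- In an ij-weak P-space, the ij-almost Lindelöf property and the ij-weakly Lindelöf property are equivalent. -/

import Mathlib

open Set Topology

universe u

variable {X : Type u}

/-- `X` with topologies `t1`, `t2` is ij-weakly Lindelöf: every `t1`-open cover admits a
countable subfamily whose union is `t2`-dense. -/
def IjWeaklyLindelof (t1 t2 : TopologicalSpace X) : Prop :=
  ∀ {ι : Type u} (U : ι → Set X), (∀ a, IsOpen[t1] (U a)) → (⋃ a, U a) = Set.univ →
    ∃ s : Set ι, s.Countable ∧ @closure X t2 (⋃ a ∈ s, U a) = Set.univ

/-- `X` is ij-almost Lindelöf: every `t1`-open cover admits a countable subfamily whose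
`t2`-closures cover `X`. -/
def IjAlmostLindelof (t1 t2 : TopologicalSpace X) : Prop :=
  ∀ {ι : Type u} (U : ι → Set X), (∀ a, IsOpen[t1] (U a)) → (⋃ a, U a) = Set.univ →
    ∃ s : Set ι, s.Countable ∧ (⋃ a ∈ s, @closure X t2 (U a)) = Set.univ

/-- `X` is an ij-weak P-space: `t2`-closure commutes with countable unions of `t1`-open sets. -/
def IjWeakPSpace (t1 t2 : TopologicalSpace X) : Prop :=
  ∀ U : ℕ → Set X, (∀ n, IsOpen[t1] (U n)) →
    @closure X t2 (⋃ n, U n) = ⋃ n, @closure X t2 (U n)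

theorem stmt7 (t1 t2 : TopologicalSpace X) (hP : IjWeakPSpace t1 t2) :
    IjAlmostLindelof t1 t2 ↔ IjWeaklyLindelof t1 t2 := by
  constructor
  · intro h ι U hU hcov
    obtain ⟨s, hs, hcl⟩ := h U hU hcov
    refine ⟨s, hs, ?_⟩
    rw [eq_univ_iff_forall] at hcl ⊢
    intro x
    obtain ⟨a, ha, hx⟩ := mem_iUnion₂.mp (hcl x)
    have := @closure_mono X t2 (U a) (⋃ b ∈ s, U b) (subset_biUnion_of_mem ha)
    exact this hx
  · intro h ι U hU hcov
    obtain ⟨s, hs, hcl⟩ := h U hU hcov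
    rcases s.eq_empty_or_nonempty with rfl | hne
    · refine ⟨∅, Set.countable_empty, ?_⟩
      simpa using hcl
    · obtain ⟨f, rfl⟩ := Set.Countable.exists_eq_range hs hne
      refine ⟨Set.range f, Set.countable_range f, ?_⟩
      have h1 : (⋃ a ∈ Set.range f, U a) = ⋃ n, U (f n) := by
        simp [Set.biUnion_range]
      have h2 : (⋃ a ∈ Set.range f, @closure X t2 (U a)) = ⋃ n, @closure X t2 (U (f n)) := by
        simp [Set.biUnion_range]
      rw [h2, ← hP (fun n => U (f n)) (fun n => hU (f n)), ← h1, hcl]
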